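/- arXiv:1304.6351 — 2 statements merged into one kernel-verified Lean document; each statement's English description precedes it below -/
import Mathlib

section
/- Let A, B be orthogonal projections on ℂ^d with ‖A+B‖_∞ > 1, let y be a unit eigenvector with (A+B)y = ‖A+B‖_∞ · y, and set a = Ay/‖Ay‖ and b = By/‖By‖ (both denominators are nonzero). Then ‖ |a⟩⟨a| + |b⟩⟨b| ‖_∞ = ‖A+B‖_∞. -/
open scoped Matrix.Norms.L2Operator ComplexOrder
open Matrix

lemma vecMulVec_mulVec' {d : ℕ} (w v x : Fin d → ℂ) :
    (Matrix.vecMulVec w v) *ᵥ x = (v ⬝ᵥ x) • w := by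
  ext i
  simp only [Matrix.mulVec, dotProduct, Matrix.vecMulVec_apply, Pi.smul_apply,
    smul_eq_mul, Finset.sum_mul]
  exact Finset.sum_congr rfl fun j _ => by ring

lemma herm_dot {d : ℕ} {P : Matrix (Fin d) (Fin d) ℂ} (hP : P.IsHermitian) (x z : Fin d → ℂ) :
    star (P *ᵥ x) ⬝ᵥ z = star x ⬝ᵥ (P *ᵥ z) := by
  rw [Matrix.star_mulVec, hP.eq, Matrix.dotProduct_mulVec]

lemma euclid_norm_sq {d : ℕ} (w : Fin d → ℂ) :
    ‖(WithLp.equiv 2 (Fin d → ℂ)).symm w‖ ^ 2 = (star w ⬝ᵥ w).re := by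
  rw [← @inner_self_eq_norm_sq ℂ, WithLp.equiv_symm_apply, EuclideanSpace.inner_toLp_toLp,
    dotProduct_comm]
  rfl

lemma lower_bound {d : ℕ} (M : Matrix (Fin d) (Fin d) ℂ) (w : Fin d → ℂ) (lam : ℝ)
    (hw : w ≠ 0) (hMw : M *ᵥ w = (lam:ℂ) • w) (hlam0 : 0 < lam) : lam ≤ ‖M‖ := by
  have key := (Matrix.toEuclideanCLM (𝕜 := ℂ) M).le_opNorm ((WithLp.equiv 2 _).symm w)
  rw [WithLp.equiv_symm_apply, Matrix.toEuclideanCLM_toLp, hMw,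
    WithLp.toLp_smul, norm_smul] at key
  have hwn : 0 < ‖(WithLp.equiv 2 (Fin d → ℂ)).symm w‖ := by
    rw [norm_pos_iff]
    simpa using hw
  have hn : ‖(lam:ℂ)‖ = lam := by
    rw [Complex.norm_real, Real.norm_of_nonneg hlam0.le]
  rw [hn] at key
  rw [Matrix.cstar_norm_def]
  exact le_of_mul_le_mul_right key hwn

lemma upper_bound {d : ℕ} (a b : Fin d → ℂ) (c : ℝ) (hc : 0 ≤ c)
    (haa : star a ⬝ᵥ a = 1) (hbb : star b ⬝ᵥ b = 1)
    (hab : star a ⬝ᵥ b = (c:ℂ)) (hba : star b ⬝ᵥ a = (c:ℂ)) :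
    ‖vecMulVec a (star a) + vecMulVec b (star b)‖ ≤ 1 + c := by
  set M := vecMulVec a (star a) + vecMulVec b (star b) with hM
  rw [Matrix.cstar_norm_def]
  apply ContinuousLinearMap.opNorm_le_bound _ (by linarith)
  intro x
  set x' : Fin d → ℂ := WithLp.equiv 2 (Fin d → ℂ) x with hx'
  set s : ℂ := star a ⬝ᵥ x' with hs
  set t : ℂ := star b ⬝ᵥ x' with ht
  set z : Fin d → ℂ := s • a + t • b with hz
  have hMx : Matrix.toEuclideanCLM (𝕜 := ℂ) M x = (WithLp.equiv 2 (Fin d → ℂ)).symm z := by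
    apply (WithLp.equiv 2 (Fin d → ℂ)).injective
    rw [Equiv.apply_symm_apply]
    change M *ᵥ x' = z
    rw [hM,
      Matrix.add_mulVec, vecMulVec_mulVec', vecMulVec_mulVec', hz, ← hs, ← ht]
  have hdzz : star z ⬝ᵥ z = star s * s + star t * t + (c:ℂ) * (star s * t + star t * s) := by
    rw [hz, star_add, star_smul, star_smul, add_dotProduct, dotProduct_add,
      dotProduct_add, smul_dotProduct, smul_dotProduct,
      smul_dotProduct, smul_dotProduct, dotProduct_smul,
      dotProduct_smul, dotProduct_smul, dotProduct_smul,
      haa, hbb, hab, hba]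
    simp only [smul_eq_mul]
    ring
  have hdzx : star z ⬝ᵥ x' = star s * s + star t * t := by
    rw [hz, star_add, star_smul, star_smul, add_dotProduct,
      smul_dotProduct, smul_dotProduct, ← hs, ← ht]
    simp only [smul_eq_mul]
  have hss : (star s * s).re = ‖s‖ ^ 2 := by
    rw [Complex.star_def, ← Complex.normSq_eq_norm_sq, Complex.normSq_apply, Complex.mul_re,
      Complex.conj_re, Complex.conj_im]; ring
  have htt : (star t * t).re = ‖t‖ ^ 2 := by
    rw [Complex.star_def, ← Complex.normSq_eq_norm_sq, Complex.normSq_apply, Complex.mul_re,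
      Complex.conj_re, Complex.conj_im]; ring
  have hcross : (star s * t + star t * s).re ≤ 2 * (‖s‖ * ‖t‖) := by
    have h1 : star t * s = star (star s * t) := by simp [mul_comm]
    have h2 : (star s * t + star t * s).re = 2 * (star s * t).re := by
      rw [h1]; simp [Complex.add_re]; ring
    rw [h2]
    have h3 : (star s * t).re ≤ ‖star s * t‖ := Complex.re_le_norm _
    have h4 : ‖star s * t‖ = ‖s‖ * ‖t‖ := by
      rw [norm_mul, norm_star]
    nlinarith
  set Q : ℝ := ‖s‖ ^ 2 + ‖t‖ ^ 2 with hQ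
  have hz2 : ‖(WithLp.equiv 2 (Fin d → ℂ)).symm z‖ ^ 2 ≤ (1 + c) * Q := by
    rw [euclid_norm_sq, hdzz]
    have h2st : 2 * (‖s‖ * ‖t‖) ≤ Q := by nlinarith [sq_nonneg (‖s‖ - ‖t‖)]
    have hre : (star s * s + star t * t + (c:ℂ) * (star s * t + star t * s)).re
        = (star s * s).re + (star t * t).re + c * (star s * t + star t * s).re := by
      simp [Complex.add_re, Complex.re_ofReal_mul]
    rw [hre, hss, htt]
    nlinarith [mul_le_mul_of_nonneg_left h2st hc, mul_le_mul_of_nonneg_left hcross hc]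
  have hinner : (inner ℂ ((WithLp.equiv 2 (Fin d → ℂ)).symm z) x : ℂ) = star z ⬝ᵥ x' := by
    rw [EuclideanSpace.inner_eq_star_dotProduct, dotProduct_comm]
    rfl
  have hQle : Q ≤ ‖(WithLp.equiv 2 (Fin d → ℂ)).symm z‖ * ‖x‖ := by
    have h1 : Q = (inner ℂ ((WithLp.equiv 2 (Fin d → ℂ)).symm z) x : ℂ).re := by
      rw [hinner, hdzx, Complex.add_re, hss, htt]
    have h2 := Complex.re_le_norm (inner ℂ ((WithLp.equiv 2 (Fin d → ℂ)).symm z) x : ℂ)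
    have h3 := norm_inner_le_norm (𝕜 := ℂ) ((WithLp.equiv 2 (Fin d → ℂ)).symm z) x
    rw [h1]
    exact le_trans h2 h3
  rw [hMx]
  set N : ℝ := ‖(WithLp.equiv 2 (Fin d → ℂ)).symm z‖ with hN
  have hN0 : 0 ≤ N := norm_nonneg _
  have hX0 : 0 ≤ ‖x‖ := norm_nonneg _
  rcases eq_or_lt_of_le hN0 with h | h
  · rw [← h]; positivity
  · have hkey : N * N ≤ ((1 + c) * ‖x‖) * N := by
      have := mul_le_mul_of_nonneg_left hQle (by linarith : (0:ℝ) ≤ 1 + c)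
      nlinarith
    exact le_of_mul_le_mul_right hkey h

/-- Let `A, B` be orthogonal projections on `ℂ^d` with `‖A+B‖_∞ > 1`,
let `y` be a unit eigenvector with `(A+B)y = ‖A+B‖_∞ · y`, and set `a = Ay/‖Ay‖`,
`b = By/‖By‖` (both denominators are nonzero).  Then
`‖ |a⟩⟨a| + |b⟩⟨b| ‖_∞ = ‖A+B‖_∞`. -/
theorem stmt_6 (d : ℕ) (A B : Matrix (Fin d) (Fin d) ℂ)
    (hA : A.IsHermitian) (hA2 : A * A = A)
    (hB : B.IsHermitian) (hB2 : B * B = B)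
    (hnorm : 1 < ‖A + B‖)
    (y : Fin d → ℂ) (hy : star y ⬝ᵥ y = 1)
    (heig : (A + B).mulVec y = (‖A + B‖ : ℂ) • y) :
    Real.sqrt ((star (A.mulVec y) ⬝ᵥ A.mulVec y).re) ≠ 0 ∧
    Real.sqrt ((star (B.mulVec y) ⬝ᵥ B.mulVec y).re) ≠ 0 ∧
    (let a : Fin d → ℂ :=
        ((Real.sqrt ((star (A.mulVec y) ⬝ᵥ A.mulVec y).re) : ℂ)⁻¹) • A.mulVec y
     let b : Fin d → ℂ :=
        ((Real.sqrt ((star (B.mulVec y) ⬝ᵥ B.mulVec y).re) : ℂ)⁻¹) • B.mulVec y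
     ‖vecMulVec a (star a) + vecMulVec b (star b)‖ = ‖A + B‖) := by
  set lam : ℝ := ‖A + B‖ with hlam
  set u : Fin d → ℂ := A.mulVec y with hu
  set v : Fin d → ℂ := B.mulVec y with hv
  have hlam1 : (1:ℝ) < lam := hnorm
  have hlam0 : (0:ℝ) < lam := lt_trans one_pos hlam1
  have hsumuv : u + v = (lam : ℂ) • y := by
    rw [hu, hv, ← Matrix.add_mulVec, heig]
  have hAu : A *ᵥ u = u := by rw [hu, Matrix.mulVec_mulVec, hA2]
  have hBv : B *ᵥ v = v := by rw [hv, Matrix.mulVec_mulVec, hB2]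
  have hAv : A *ᵥ v = ((lam : ℂ) - 1) • u := by
    have h1 : A *ᵥ (u + v) = (lam : ℂ) • u := by
      rw [hsumuv, Matrix.mulVec_smul, hu]
    rw [Matrix.mulVec_add, hAu] at h1
    have : A *ᵥ v = (lam:ℂ) • u - u := by rw [← h1]; abel
    rw [this, sub_smul, one_smul]
  have hBu : B *ᵥ u = ((lam : ℂ) - 1) • v := by
    have h1 : B *ᵥ (u + v) = (lam : ℂ) • v := by
      rw [hsumuv, Matrix.mulVec_smul, hv]
    rw [Matrix.mulVec_add, hBv] at h1
    have : B *ᵥ u = (lam:ℂ) • v - v := by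
      rw [← h1]; abel
    rw [this, sub_smul, one_smul]
  have huu : star u ⬝ᵥ u = star y ⬝ᵥ u := by
    conv_lhs => rw [hu, herm_dot hA, hAu]
  have hvv : star v ⬝ᵥ v = star y ⬝ᵥ v := by
    conv_lhs => rw [hv, herm_dot hB, hBv]
  have hsum2 : star u ⬝ᵥ u + star v ⬝ᵥ v = (lam : ℂ) := by
    rw [huu, hvv, ← dotProduct_add, hsumuv, dotProduct_smul, hy,
      smul_eq_mul, mul_one]
  have hcu : star u ⬝ᵥ v = ((lam:ℂ) - 1) * (star u ⬝ᵥ u) := by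
    conv_lhs => rw [← hAu, herm_dot hA, hAv]
    rw [dotProduct_smul, smul_eq_mul]
  have hcv : star u ⬝ᵥ v = ((lam:ℂ) - 1) * (star v ⬝ᵥ v) := by
    conv_lhs => rw [← hBv, ← herm_dot hB, hBu]
    rw [star_smul, smul_dotProduct, smul_eq_mul]
    congr 1
    simp [Complex.ext_iff]
  have hlamne : ((lam:ℂ) - 1) ≠ 0 := by
    simp only [ne_eq, sub_eq_zero]
    exact_mod_cast (ne_of_gt hlam1)
  have heq_uv : star u ⬝ᵥ u = star v ⬝ᵥ v :=
    mul_left_cancel₀ hlamne (hcu ▸ hcv)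
  have huu_val : star u ⬝ᵥ u = ((lam/2 : ℝ) : ℂ) := by
    have h2 : (2:ℂ) * (star u ⬝ᵥ u) = (lam:ℂ) := by
      rw [two_mul]; nth_rewrite 2 [heq_uv]; exact hsum2
    push_cast
    field_simp
    linear_combination h2
  have hvv_val : star v ⬝ᵥ v = ((lam/2 : ℝ) : ℂ) := heq_uv ▸ huu_val
  have hre_u : (star u ⬝ᵥ u).re = lam/2 := by rw [huu_val]; simp
  have hre_v : (star v ⬝ᵥ v).re = lam/2 := by rw [hvv_val]; simp
  have hhalf : (0:ℝ) < lam / 2 := by linarith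
  have hν : Real.sqrt (lam/2) ≠ 0 := by positivity
  refine ⟨by rw [hre_u]; exact hν, by rw [hre_v]; exact hν, ?_⟩
  rw [hre_u, hre_v]
  set ν : ℝ := Real.sqrt (lam/2) with hνd
  have hν2 : ((ν:ℂ))^2 = ((lam/2 : ℝ) : ℂ) := by
    rw [hνd]
    norm_cast
    exact Real.sq_sqrt hhalf.le
  have hνne : (ν:ℂ) ≠ 0 := by exact_mod_cast hν
  set a : Fin d → ℂ := ((ν:ℂ))⁻¹ • u with had
  set b : Fin d → ℂ := ((ν:ℂ))⁻¹ • v with hbd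
  show ‖vecMulVec a (star a) + vecMulVec b (star b)‖ = lam
  have hstar_inv : star ((ν:ℂ)⁻¹) = (ν:ℂ)⁻¹ := by
    simp [Complex.star_def, map_inv₀, Complex.conj_ofReal]
  have hdot : ∀ w1 w2 : Fin d → ℂ, star ((ν:ℂ)⁻¹ • w1) ⬝ᵥ ((ν:ℂ)⁻¹ • w2)
      = (ν:ℂ)⁻¹ * ((ν:ℂ)⁻¹ * (star w1 ⬝ᵥ w2)) := by
    intro w1 w2
    rw [star_smul, hstar_inv, smul_dotProduct, dotProduct_smul,
      smul_eq_mul, smul_eq_mul]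
  have hnuinv : (ν:ℂ)⁻¹ * ((ν:ℂ)⁻¹ * ((lam/2 : ℝ):ℂ)) = 1 := by
    rw [← hν2]
    field_simp
  have haa : star a ⬝ᵥ a = 1 := by
    rw [had, hdot, huu_val, hnuinv]
  have hbb : star b ⬝ᵥ b = 1 := by
    rw [hbd, hdot, hvv_val, hnuinv]
  have hab : star a ⬝ᵥ b = (lam:ℂ) - 1 := by
    rw [had, hbd, hdot, hcu, huu_val]
    rw [show (ν:ℂ)⁻¹ * ((ν:ℂ)⁻¹ * (((lam:ℂ) - 1) * ((lam/2:ℝ):ℂ)))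
      = ((lam:ℂ) - 1) * ((ν:ℂ)⁻¹ * ((ν:ℂ)⁻¹ * ((lam/2:ℝ):ℂ))) by ring, hnuinv, mul_one]
  have hba : star b ⬝ᵥ a = (lam:ℂ) - 1 := by
    rw [hbd, had, hdot, Matrix.star_dotProduct, hcu, huu_val]
    rw [show star (((lam:ℂ) - 1) * ((lam/2:ℝ):ℂ)) = ((lam:ℂ) - 1) * ((lam/2:ℝ):ℂ) by
      simp [Complex.star_def, _root_.map_mul, Complex.conj_ofReal]]
    rw [show (ν:ℂ)⁻¹ * ((ν:ℂ)⁻¹ * (((lam:ℂ) - 1) * ((lam/2:ℝ):ℂ)))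
      = ((lam:ℂ) - 1) * ((ν:ℂ)⁻¹ * ((ν:ℂ)⁻¹ * ((lam/2:ℝ):ℂ))) by ring, hnuinv, mul_one]
  -- lower bound
  have hMab : (vecMulVec a (star a) + vecMulVec b (star b)) *ᵥ (a + b)
      = (lam:ℂ) • (a + b) := by
    rw [Matrix.add_mulVec, vecMulVec_mulVec', vecMulVec_mulVec', dotProduct_add,
      dotProduct_add, haa, hbb, hab, hba, smul_add]
    rw [show (1 + ((lam:ℂ) - 1)) = (lam:ℂ) by ring, show (((lam:ℂ) - 1) + 1) = (lam:ℂ) by ring]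
  have hne : a + b ≠ 0 := by
    intro h
    have h0 : star (a + b) ⬝ᵥ (a + b) = 0 := by rw [h]; simp
    rw [star_add, add_dotProduct, dotProduct_add, dotProduct_add,
      haa, hbb, hab, hba] at h0
    have h2 : ((2 * lam : ℝ) : ℂ) = 0 := by push_cast; linear_combination h0
    have : (2 * lam : ℝ) = 0 := by exact_mod_cast h2
    linarith
  have hlb : lam ≤ ‖vecMulVec a (star a) + vecMulVec b (star b)‖ :=
    lower_bound _ _ lam hne hMab hlam0
  have hub : ‖vecMulVec a (star a) + vecMulVec b (star b)‖ ≤ 1 + (lam - 1) := by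
    apply upper_bound a b (lam - 1) (by linarith) haa hbb
    · rw [hab]; push_cast; ring
    · rw [hba]; push_cast; ring
  rw [show (1 + (lam - 1)) = lam by ring] at hub
  exact le_antisymm hub hlb
end

section
/- Let {a_m}, {b_n} be orthonormal bases of ℂ^d. Then Ω₁ := max over pairs (m,n) and density matrices ρ of ⟨a_m|ρ|a_m⟩·⟨b_n|ρ|b_n⟩ equals (1/4)·(1+c)², where c = max_{m,n} |⟨a_m|b_n⟩|. -/
open scoped Matrix.Norms.L2Operator ComplexOrder
open Matrix

lemma rc_ofReal (r : ℝ) : (RCLike.ofReal r : ℂ) = (r : ℂ) := rfl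

lemma key_ineq {E : Type*} [NormedAddCommGroup E] [InnerProductSpace ℂ E]
    (a b x : E) (ha : ‖a‖ = 1) (hb : ‖b‖ = 1) (c : ℝ)
    (hab : ‖(inner ℂ a b : ℂ)‖ ≤ c) :
    ‖(inner ℂ a x : ℂ)‖ ^ 2 + ‖(inner ℂ b x : ℂ)‖ ^ 2 ≤ (1 + c) * ‖x‖ ^ 2 := by
  set u : ℂ := inner ℂ a x with hu
  set v : ℂ := inner ℂ b x with hv
  have hc0 : 0 ≤ c := le_trans (norm_nonneg _) hab
  set w : E := u • a + v • b with hw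
  set S : ℝ := ‖u‖ ^ 2 + ‖v‖ ^ 2 with hS
  have hS0 : 0 ≤ S := by positivity
  have hwx : (inner ℂ w x : ℂ) = (S : ℝ) := by
    rw [hw, inner_add_left, inner_smul_left, inner_smul_left, ← hu, ← hv,
      RCLike.conj_mul, RCLike.conj_mul, hS]
    push_cast
    norm_cast
  have h1 : S ≤ ‖w‖ * ‖x‖ := by
    calc S = ‖(inner ℂ w x : ℂ)‖ := by rw [hwx]; simp [abs_of_nonneg hS0]
    _ ≤ ‖w‖ * ‖x‖ := norm_inner_le_norm _ _
  set t : ℂ := (starRingEnd ℂ) u * v * inner ℂ a b with ht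
  have hww : (inner ℂ w w : ℂ) = ((‖u‖ : ℝ) : ℂ) ^ 2 + ((‖v‖ : ℝ) : ℂ) ^ 2
      + (t + (starRingEnd ℂ) t) := by
    rw [hw, inner_add_add_self]
    simp only [inner_smul_left, inner_smul_right, inner_self_eq_norm_sq_to_K, ha, hb, ht,
      norm_smul, mul_one, _root_.map_mul, Complex.conj_conj, (inner_conj_symm b a).symm,
      rc_ofReal]
    push_cast
    ring
  have h2 : ‖w‖ ^ 2 ≤ (1 + c) * S := by
    have hre : (‖w‖ : ℝ) ^ 2 = S + 2 * t.re := by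
      rw [← inner_self_eq_norm_sq (𝕜 := ℂ) w, hww]
      simp only [RCLike.re_to_complex, rc_ofReal, Complex.add_re, Complex.conj_re,
        ← Complex.ofReal_pow, Complex.ofReal_re, hS]
      ring
    have hbd : t.re ≤ ‖u‖ * ‖v‖ * c := by
      calc t.re ≤ ‖t‖ := Complex.re_le_norm _
      _ = ‖u‖ * ‖v‖ * ‖(inner ℂ a b : ℂ)‖ := by rw [ht]; simp [mul_assoc]
      _ ≤ ‖u‖ * ‖v‖ * c := by apply mul_le_mul_of_nonneg_left hab; positivity
    nlinarith [sq_nonneg (‖u‖ - ‖v‖), norm_nonneg u, norm_nonneg v]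
  rcases eq_or_lt_of_le hS0 with h | h
  · rw [← h]; positivity
  · have h3 : S ^ 2 ≤ (1 + c) * S * ‖x‖ ^ 2 := by
      nlinarith [norm_nonneg w, norm_nonneg x]
    nlinarith

lemma dot_inner {d : ℕ} (x y : Fin d → ℂ) :
    star x ⬝ᵥ y = inner ℂ (WithLp.toLp 2 x : EuclideanSpace ℂ (Fin d)) (WithLp.toLp 2 y) := by
  simp [dotProduct, PiLp.inner_apply, RCLike.inner_apply, mul_comm]

lemma norm_one_of_inner_one {E : Type*} [NormedAddCommGroup E] [InnerProductSpace ℂ E]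
    (x : E) (h : (inner ℂ x x : ℂ) = 1) : ‖x‖ = 1 := by
  have h3 := inner_self_eq_norm_sq (𝕜 := ℂ) x
  rw [h] at h3
  simp only [RCLike.re_to_complex, Complex.one_re] at h3
  calc ‖x‖ = Real.sqrt (‖x‖ ^ 2) := (Real.sqrt_sq (norm_nonneg _)).symm
  _ = 1 := by rw [← h3]; exact Real.sqrt_one

lemma key_ineq' {d : ℕ} (a b x : Fin d → ℂ) (ha : star a ⬝ᵥ a = 1) (hb : star b ⬝ᵥ b = 1)
    (c : ℝ) (hab : ‖star a ⬝ᵥ b‖ ≤ c) :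
    ‖star x ⬝ᵥ a‖ ^ 2 + ‖star x ⬝ᵥ b‖ ^ 2
      ≤ (1 + c) * (star x ⬝ᵥ x).re := by
  have hna : ‖(WithLp.toLp 2 a : EuclideanSpace ℂ (Fin d))‖ = 1 :=
    norm_one_of_inner_one _ (by rw [← dot_inner]; exact ha)
  have hnb : ‖(WithLp.toLp 2 b : EuclideanSpace ℂ (Fin d))‖ = 1 :=
    norm_one_of_inner_one _ (by rw [← dot_inner]; exact hb)
  have hab' : ‖(inner ℂ (WithLp.toLp 2 a : EuclideanSpace ℂ (Fin d)) (WithLp.toLp 2 b) : ℂ)‖ ≤ c := by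
    rw [← dot_inner]; exact hab
  have hmain := key_ineq _ _ (WithLp.toLp 2 x : EuclideanSpace ℂ (Fin d)) hna hnb c hab'
  have e1 : ‖star x ⬝ᵥ a‖ = ‖(inner ℂ (WithLp.toLp 2 a : EuclideanSpace ℂ (Fin d)) (WithLp.toLp 2 x) : ℂ)‖ := by
    rw [dot_inner, ← norm_inner_symm]
  have e2 : ‖star x ⬝ᵥ b‖ = ‖(inner ℂ (WithLp.toLp 2 b : EuclideanSpace ℂ (Fin d)) (WithLp.toLp 2 x) : ℂ)‖ := by
    rw [dot_inner, ← norm_inner_symm]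
  have e3 : (star x ⬝ᵥ x).re = ‖(WithLp.toLp 2 x : EuclideanSpace ℂ (Fin d))‖ ^ 2 := by
    rw [dot_inner]; exact inner_self_eq_norm_sq (𝕜 := ℂ) _
  rw [e1, e2, e3]
  exact hmain

lemma outer_dot {d : ℕ} (s : ℝ) (ψ v : Fin d → ℂ) :
    star v ⬝ᵥ (Matrix.of fun i j => (s : ℂ) * (ψ i * (starRingEnd ℂ) (ψ j))) *ᵥ v
      = (s : ℂ) * ((star v ⬝ᵥ ψ) * (starRingEnd ℂ) (star v ⬝ᵥ ψ)) := by
  simp only [mulVec, dotProduct, of_apply, Pi.star_apply, map_sum, _root_.map_mul,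
    Complex.conj_conj, RCLike.star_def, Finset.mul_sum, Finset.sum_mul]
  rw [Finset.sum_comm]
  refine Finset.sum_congr rfl fun j _ => ?_
  refine Finset.sum_congr rfl fun i _ => ?_
  ring

lemma outer_psd {d : ℕ} (s : ℝ) (hs : 0 ≤ s) (ψ : Fin d → ℂ) :
    (Matrix.of fun i j => (s : ℂ) * (ψ i * (starRingEnd ℂ) (ψ j))).PosSemidef := by
  refine posSemidef_iff_dotProduct_mulVec.mpr ⟨?_, ?_⟩
  · ext i j
    simp only [conjTranspose_apply, of_apply, RCLike.star_def, _root_.map_mul,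
      Complex.conj_conj, Complex.conj_ofReal]
    ring
  · intro x
    rw [outer_dot, Complex.mul_conj, ← Complex.ofReal_mul, Complex.zero_le_real]
    exact mul_nonneg hs (Complex.normSq_nonneg _)

set_option maxHeartbeats 1000000 in
/-- For two orthonormal bases `{a m}`, `{b n}` of `ℂ^d`,
`Ω₁ := max_{(m,n),ρ} ⟨a m|ρ|a m⟩·⟨b n|ρ|b n⟩ = (1/4)(1+c)²`, where
`c = max_{m,n} |⟨a m|b n⟩|` is the maximum overlap between the bases. -/
theorem stmt_14 (d : ℕ) (hd : 0 < d) (a b : Fin d → (Fin d → ℂ))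
    (ha : ∀ m m', star (a m) ⬝ᵥ a m' = if m = m' then 1 else 0)
    (hb : ∀ n n', star (b n) ⬝ᵥ b n' = if n = n' then 1 else 0)
    (c : ℝ) (hc : IsGreatest {x : ℝ | ∃ m n, x = ‖star (a m) ⬝ᵥ b n‖} c) :
    IsGreatest {x : ℝ | ∃ m n, ∃ ρ : Matrix (Fin d) (Fin d) ℂ,
        ρ.PosSemidef ∧ ρ.trace = 1 ∧
        x = (star (a m) ⬝ᵥ ρ.mulVec (a m)).re * (star (b n) ⬝ᵥ ρ.mulVec (b n)).re}
      ((1 / 4) * (1 + c) ^ 2) := by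
  constructor
  · -- membership : construct the optimal pure state
    obtain ⟨m, n, hcmn⟩ := hc.1
    set φ : ℂ := star (a m) ⬝ᵥ b n with hφ
    have hc0 : 0 ≤ c := hcmn ▸ (norm_nonneg φ)
    set z : ℂ := if φ = 0 then 1 else (starRingEnd ℂ) φ / (‖φ‖ : ℂ) with hz
    have hz2 : z * φ = (c : ℂ) := by
      by_cases h : φ = 0
      · rw [hz, if_pos h, h, mul_zero]
        rw [h] at hcmn
        simp at hcmn
        rw [hcmn]
        norm_num
      · rw [hz, if_neg h]
        have habs : (‖φ‖ : ℂ) ≠ 0 := by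
          simpa using (norm_ne_zero_iff.mpr h)
        field_simp
        rw [mul_comm, Complex.mul_conj, Complex.normSq_eq_norm_sq, hcmn]
        push_cast
        ring
    have hz1 : (starRingEnd ℂ) z * z = 1 := by
      by_cases h : φ = 0
      · rw [hz, if_pos h]; simp
      · rw [hz, if_neg h]
        have habs : (‖φ‖ : ℂ) ≠ 0 := by simpa using (norm_ne_zero_iff.mpr h)
        rw [map_div₀, Complex.conj_conj, Complex.conj_ofReal]
        field_simp
        rw [Complex.mul_conj, Complex.normSq_eq_norm_sq]
        push_cast
        ring
    have h3 : (starRingEnd ℂ) z * (starRingEnd ℂ) φ = (c : ℂ) := by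
      rw [← _root_.map_mul, hz2, Complex.conj_ofReal]
    have hbna : star (b n) ⬝ᵥ a m = (starRingEnd ℂ) φ := by
      rw [hφ, star_dotProduct]; rfl
    have h2c : (0 : ℝ) < 2 + 2 * c := by linarith
    set ψ : Fin d → ℂ := a m + z • b n with hψdef
    set s : ℝ := (2 + 2 * c)⁻¹ with hsdef
    have hs0 : 0 ≤ s := by positivity
    refine ⟨m, n, Matrix.of fun i j => (s : ℂ) * (ψ i * (starRingEnd ℂ) (ψ j)),
      outer_psd s hs0 ψ, ?_, ?_⟩
    · -- trace equals one
      have hψψ : star ψ ⬝ᵥ ψ = ((2 + 2 * c : ℝ) : ℂ) := by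
        rw [hψdef, star_add, star_smul, add_dotProduct, dotProduct_add, dotProduct_add,
          smul_dotProduct, smul_dotProduct, dotProduct_smul, dotProduct_smul,
          ha m m, hb n n, hbna, if_pos (rfl : m = m), if_pos (rfl : n = n)]
        simp only [smul_eq_mul, RCLike.star_def, ← hφ]
        push_cast
        linear_combination hz2 + h3 + hz1
      have htrace : (Matrix.of fun i j => (s : ℂ) * (ψ i * (starRingEnd ℂ) (ψ j))).trace
          = (s : ℂ) * (star ψ ⬝ᵥ ψ) := by
        rw [trace]
        simp only [diag_apply, of_apply, dotProduct, Pi.star_apply, RCLike.star_def,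
          Finset.mul_sum]
        refine Finset.sum_congr rfl fun i _ => ?_
        ring
      rw [htrace, hψψ, ← Complex.ofReal_mul, hsdef]
      norm_cast
      field_simp
    · -- the value
      have hA : star (a m) ⬝ᵥ ψ = ((1 + c : ℝ) : ℂ) := by
        rw [hψdef, dotProduct_add, dotProduct_smul, ha m m, if_pos (rfl : m = m), smul_eq_mul, ← hφ, hz2]
        push_cast
        ring
      have hB : star (b n) ⬝ᵥ ψ = (starRingEnd ℂ) φ + z := by
        rw [hψdef, dotProduct_add, dotProduct_smul, hb n n, if_pos (rfl : n = n), smul_eq_mul, hbna]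
        ring
      have hBval : ((starRingEnd ℂ) φ + z) * (starRingEnd ℂ) ((starRingEnd ℂ) φ + z)
          = (((1 + c) ^ 2 : ℝ) : ℂ) := by
        have h1 : (starRingEnd ℂ) φ * φ = ((c : ℂ)) ^ 2 := by
          rw [mul_comm ((starRingEnd ℂ) φ) φ, Complex.mul_conj, Complex.normSq_eq_norm_sq, hcmn]
          push_cast
          ring
        have h4 : z * (starRingEnd ℂ) z = 1 := by rw [mul_comm]; exact hz1
        simp only [map_add, Complex.conj_conj]
        push_cast
        linear_combination h1 + h3 + hz2 + h4
      rw [outer_dot, outer_dot, hA, hB, hBval, Complex.conj_ofReal]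
      rw [← Complex.ofReal_mul, ← Complex.ofReal_mul, ← Complex.ofReal_mul]
      rw [Complex.ofReal_re, Complex.ofReal_re, hsdef]
      field_simp
      ring
  · -- upper bound
    rintro x ⟨m, n, ρ, hρ, htr, rfl⟩
    open scoped MatrixOrder in
    obtain ⟨B, rfl⟩ := CStarAlgebra.nonneg_iff_eq_star_mul_self.mp hρ.nonneg
    rw [star_eq_conjTranspose] at htr ⊢
    have hcomp : ∀ v : Fin d → ℂ, (star v ⬝ᵥ (Bᴴ * B) *ᵥ v).re
        = ∑ k, ‖star (star (B k)) ⬝ᵥ v‖ ^ 2 := by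
      intro v
      have h1 : star v ⬝ᵥ (Bᴴ * B) *ᵥ v = star (B *ᵥ v) ⬝ᵥ (B *ᵥ v) := by
        rw [← mulVec_mulVec, dotProduct_mulVec, ← star_mulVec]
      have h3 : ∀ k, ‖star (star (B k)) ⬝ᵥ v‖ ^ 2
          = (star ((B *ᵥ v) k) * (B *ᵥ v) k).re := by
        intro k
        have h2 : star (star (B k)) ⬝ᵥ v = (B *ᵥ v) k := by
          simp [mulVec, dotProduct]
        rw [h2, Complex.sq_norm]
        simp [Complex.normSq_apply, Complex.mul_re]
      rw [h1]
      simp only [dotProduct, Pi.star_apply, Complex.re_sum]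
      exact Finset.sum_congr rfl fun k _ => (h3 k).symm
    have hsum : ∑ k, (star (star (B k)) ⬝ᵥ star (B k)).re = 1 := by
      have h1 : (Bᴴ * B).trace.re = 1 := by rw [htr]; simp
      rw [trace] at h1
      simp only [diag_apply, mul_apply, conjTranspose_apply, Complex.re_sum] at h1
      rw [← h1, Finset.sum_comm]
      refine Finset.sum_congr rfl fun k _ => ?_
      simp only [dotProduct, Pi.star_apply, star_star, Complex.re_sum, RCLike.star_def]
      refine Finset.sum_congr rfl fun i _ => ?_
      simp only [Complex.mul_re, Complex.conj_re, Complex.conj_im]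
      ring
    have hc0 : 0 ≤ c := by
      obtain ⟨m', n', h'⟩ := hc.1
      exact h' ▸ norm_nonneg _
    have hkey : ∀ k, ‖star (star (B k)) ⬝ᵥ a m‖ ^ 2
        + ‖star (star (B k)) ⬝ᵥ b n‖ ^ 2
        ≤ (1 + c) * (star (star (B k)) ⬝ᵥ star (B k)).re := by
      intro k
      exact key_ineq' (a m) (b n) (star (B k))
        (by rw [ha m m, if_pos rfl]) (by rw [hb n n, if_pos rfl])
        c (hc.2 ⟨m, n, rfl⟩)
    set p : ℝ := (star (a m) ⬝ᵥ (Bᴴ * B) *ᵥ (a m)).re with hp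
    set q : ℝ := (star (b n) ⬝ᵥ (Bᴴ * B) *ᵥ (b n)).re with hq
    have hpq : p + q ≤ 1 + c := by
      rw [hp, hq, hcomp, hcomp, ← Finset.sum_add_distrib]
      calc ∑ k, (‖star (star (B k)) ⬝ᵥ a m‖ ^ 2
              + ‖star (star (B k)) ⬝ᵥ b n‖ ^ 2)
          ≤ ∑ k, (1 + c) * (star (star (B k)) ⬝ᵥ star (B k)).re :=
            Finset.sum_le_sum fun k _ => hkey k
        _ = 1 + c := by rw [← Finset.mul_sum, hsum, mul_one]
    have hp0 : 0 ≤ p := by rw [hp, hcomp]; positivity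
    have hq0 : 0 ≤ q := by rw [hq, hcomp]; positivity
    nlinarith [sq_nonneg (p - q), sq_nonneg (p + q)]
end
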